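/- Let p, k, l, d be positive integers with 1/l = 1/2 - 1/p - 1/k and 1/d = 1/2 - 3/p. The group with presentation ⟨J, P, R₁, R₂ | J³ = R₁^p = R₂^p = (P⁻¹J)^k = (R₂R₁J)^l = P^{3d} = 1, R₂ = P R₁ P⁻¹, R₂ = J R₁ J⁻¹, P = R₁R₂⟩ is isomorphic to the group with presentation ⟨J, R₁ | J³ = R₁^p = (R₁J)^{2k} = (R₁J²)^{2l} = (R₁JR₁J²)^{3d} = 1, R₁ J R₁ J² R₁ J R₁^{p-1} J² R₁^{p-1} J R₁^{p-1} J² = 1⟩, via the map determined by sending J to J, R₁ to R₁, R₂ to J R₁ J⁻¹ and P to R₁ · J R₁ J⁻¹. -/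

import Mathlib

/-- Generators of the two-generator presentations of the 3-fold Deligne-Mostow lattices. -/
inductive Gen2 | J | R

/-- Generators of the four-generator presentations of the 3-fold Deligne-Mostow lattices. -/
inductive Gen4 | J | P | R₁ | R₂

namespace FourGen

/-- Shorthand for the free group generators. -/
def J : FreeGroup Gen4 := FreeGroup.of Gen4.J
def P : FreeGroup Gen4 := FreeGroup.of Gen4.P
def R₁ : FreeGroup Gen4 := FreeGroup.of Gen4.R₁
def R₂ : FreeGroup Gen4 := FreeGroup.of Gen4.R₂

end FourGen

/-- The four-generator presentation of the type four Deligne-Mostow lattice: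
`J³ = R₁ᵖ = R₂ᵖ = (P⁻¹J)ᵏ = (R₂R₁J)ˡ = P³ᵈ = 1`, `R₂ = PR₁P⁻¹`, `R₂ = JR₁J⁻¹`, `P = R₁R₂`. -/
def rels4Four (p k l d : ℕ) : Set (FreeGroup Gen4) :=
  { FourGen.J ^ 3,
    FourGen.R₁ ^ p,
    FourGen.R₂ ^ p,
    (FourGen.P⁻¹ * FourGen.J) ^ k,
    (FourGen.R₂ * FourGen.R₁ * FourGen.J) ^ l,
    FourGen.P ^ (3 * d),
    FourGen.R₂ * (FourGen.P * FourGen.R₁ * FourGen.P⁻¹)⁻¹,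
    FourGen.R₂ * (FourGen.J * FourGen.R₁ * FourGen.J⁻¹)⁻¹,
    FourGen.P * (FourGen.R₁ * FourGen.R₂)⁻¹ }

/-- Relators of the two-generator presentation of type four Deligne-Mostow lattices. -/
def relsFour (p k l d : ℕ) : Set (FreeGroup Gen2) :=
  { (FreeGroup.of Gen2.J) ^ 3, (FreeGroup.of Gen2.R) ^ p,
    (FreeGroup.of Gen2.R * FreeGroup.of Gen2.J) ^ (2 * k),
    (FreeGroup.of Gen2.R * (FreeGroup.of Gen2.J) ^ 2) ^ (2 * l),
    (FreeGroup.of Gen2.R * FreeGroup.of Gen2.J * FreeGroup.of Gen2.R *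
      (FreeGroup.of Gen2.J) ^ 2) ^ (3 * d),
    FreeGroup.of Gen2.R * FreeGroup.of Gen2.J * FreeGroup.of Gen2.R *
      (FreeGroup.of Gen2.J) ^ 2 * FreeGroup.of Gen2.R * FreeGroup.of Gen2.J *
      (FreeGroup.of Gen2.R) ^ (p - 1) * (FreeGroup.of Gen2.J) ^ 2 *
      (FreeGroup.of Gen2.R) ^ (p - 1) * FreeGroup.of Gen2.J *
      (FreeGroup.of Gen2.R) ^ (p - 1) * (FreeGroup.of Gen2.J) ^ 2 }

private lemma mk_of' {α : Type*} {rels : Set (FreeGroup α)} (x : α) :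
    PresentedGroup.mk rels (FreeGroup.of x) = PresentedGroup.of x := rfl

private lemma relOne' {α : Type*} {rels : Set (FreeGroup α)} {r : FreeGroup α} (h : r ∈ rels) :
    PresentedGroup.mk rels r = 1 :=
  (QuotientGroup.eq_one_iff r).mpr (Subgroup.subset_normalClosure h)

private lemma conj_pow_eq_one_iff' {G : Type*} [Group G] {x g y : G} (hx : x = g * y * g⁻¹)
    (n : ℕ) : x ^ n = 1 ↔ y ^ n = 1 := by
  subst hx
  rw [conj_pow, mul_inv_eq_one, mul_eq_left]

private lemma pow_pred_eq_inv' {G : Type*} [Group G] {r : G} {p : ℕ} (hp : 0 < p)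
    (h : r ^ p = 1) : r ^ (p - 1) = r⁻¹ :=
  eq_inv_of_mul_eq_one_left (by rw [← pow_succ, Nat.sub_add_cancel hp, h])

section NF
variable {G : Type*} [Group G] {j r : G} (h1 : j ^ 3 = 1)
include h1

private lemma hjjj' : j * j * j = 1 := by rw [← h1, pow_succ, pow_two]

private lemma hjjj : j * (j * j) = 1 := by rw [← mul_assoc]; exact hjjj' h1

private lemma hinvj : j⁻¹ = j * j := inv_eq_of_mul_eq_one_right (hjjj h1)

private lemma hredj : ∀ t : G, j * (j * (j * t)) = t := fun t => by
  rw [← mul_assoc, ← mul_assoc, hjjj' h1, one_mul]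

private lemma iff3 (k : ℕ) :
    ((r * (j * r * j⁻¹))⁻¹ * j) ^ k = 1 ↔ ((r * j) ^ 2) ^ k = 1 := by
  have hx : (r * (j * r * j⁻¹))⁻¹ * j = (j * j) * ((r * j) ^ 2)⁻¹ * (j * j)⁻¹ := by
    simp only [pow_two, mul_inv_rev, inv_inv, hinvj h1, mul_assoc, hredj h1, hjjj h1,
      one_mul, mul_one, inv_mul_cancel_left, mul_inv_cancel_left, inv_mul_cancel, mul_inv_cancel]
  rw [conj_pow_eq_one_iff' hx, inv_pow, inv_eq_one]

private lemma iff4 (l : ℕ) :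
    ((j * r * j⁻¹) * r * j) ^ l = 1 ↔ ((r * j ^ 2) ^ 2) ^ l = 1 := by
  have hx : (j * r * j⁻¹) * r * j = j * ((r * j ^ 2) ^ 2) * j⁻¹ := by
    simp only [pow_two, mul_inv_rev, inv_inv, hinvj h1, mul_assoc, hredj h1, hjjj h1,
      one_mul, mul_one, inv_mul_cancel_left, mul_inv_cancel_left, inv_mul_cancel, mul_inv_cancel]
  rw [conj_pow_eq_one_iff' hx]

private lemma eqP : r * (j * r * j⁻¹) = r * j * r * j ^ 2 := by
  simp only [pow_two, hinvj h1, mul_assoc]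

private lemma eqW :
    (j * r * j⁻¹) * ((r * (j * r * j⁻¹)) * r * (r * (j * r * j⁻¹))⁻¹)⁻¹ =
      (r * j * r * j ^ 2 * r * j * r⁻¹ * j ^ 2 * r⁻¹ * j * r⁻¹ * j ^ 2)⁻¹ := by
  simp only [pow_two, mul_inv_rev, inv_inv, hinvj h1, mul_assoc, hredj h1, hjjj h1,
    one_mul, mul_one, inv_mul_cancel_left, mul_inv_cancel_left, inv_mul_cancel, mul_inv_cancel]

end NF

/-- The map `Gen4 → PresentedGroup (relsFour p k l d)`. -/
private def fwd (p k l d : ℕ) : Gen4 → PresentedGroup (relsFour p k l d)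
  | Gen4.J => .of Gen2.J
  | Gen4.P => .of Gen2.R * (.of Gen2.J * .of Gen2.R * (.of Gen2.J)⁻¹)
  | Gen4.R₁ => .of Gen2.R
  | Gen4.R₂ => .of Gen2.J * .of Gen2.R * (.of Gen2.J)⁻¹

/-- The map `Gen2 → PresentedGroup (rels4Four p k l d)`. -/
private def bwd (p k l d : ℕ) : Gen2 → PresentedGroup (rels4Four p k l d)
  | Gen2.J => .of Gen4.J
  | Gen2.R => .of Gen4.R₁

private lemma memF1 (p k l d : ℕ) : (FreeGroup.of Gen2.J) ^ 3 ∈ relsFour p k l d :=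
  Set.mem_insert _ _
private lemma memF2 (p k l d : ℕ) : (FreeGroup.of Gen2.R) ^ p ∈ relsFour p k l d :=
  Set.mem_insert_of_mem _ (Set.mem_insert _ _)
private lemma memF3 (p k l d : ℕ) :
    (FreeGroup.of Gen2.R * FreeGroup.of Gen2.J) ^ (2 * k) ∈ relsFour p k l d :=
  Set.mem_insert_of_mem _ (Set.mem_insert_of_mem _ (Set.mem_insert _ _))
private lemma memF4 (p k l d : ℕ) :
    (FreeGroup.of Gen2.R * (FreeGroup.of Gen2.J) ^ 2) ^ (2 * l) ∈ relsFour p k l d :=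
  Set.mem_insert_of_mem _ (Set.mem_insert_of_mem _ (Set.mem_insert_of_mem _ (Set.mem_insert _ _)))
private lemma memF5 (p k l d : ℕ) :
    (FreeGroup.of Gen2.R * FreeGroup.of Gen2.J * FreeGroup.of Gen2.R *
      (FreeGroup.of Gen2.J) ^ 2) ^ (3 * d) ∈ relsFour p k l d :=
  Set.mem_insert_of_mem _ (Set.mem_insert_of_mem _ (Set.mem_insert_of_mem _ (Set.mem_insert_of_mem _ (Set.mem_insert _ _))))
private lemma memF6 (p k l d : ℕ) :
    FreeGroup.of Gen2.R * FreeGroup.of Gen2.J * FreeGroup.of Gen2.R *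
      (FreeGroup.of Gen2.J) ^ 2 * FreeGroup.of Gen2.R * FreeGroup.of Gen2.J *
      (FreeGroup.of Gen2.R) ^ (p - 1) * (FreeGroup.of Gen2.J) ^ 2 *
      (FreeGroup.of Gen2.R) ^ (p - 1) * FreeGroup.of Gen2.J *
      (FreeGroup.of Gen2.R) ^ (p - 1) * (FreeGroup.of Gen2.J) ^ 2 ∈ relsFour p k l d :=
  Set.mem_insert_of_mem _ (Set.mem_insert_of_mem _ (Set.mem_insert_of_mem _ (Set.mem_insert_of_mem _ (Set.mem_insert_of_mem _ (Set.mem_singleton _)))))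

private lemma mem41 (p k l d : ℕ) : FourGen.J ^ 3 ∈ rels4Four p k l d :=
  Set.mem_insert _ _
private lemma mem42 (p k l d : ℕ) : FourGen.R₁ ^ p ∈ rels4Four p k l d :=
  Set.mem_insert_of_mem _ (Set.mem_insert _ _)
private lemma mem44 (p k l d : ℕ) : (FourGen.P⁻¹ * FourGen.J) ^ k ∈ rels4Four p k l d :=
  Set.mem_insert_of_mem _ (Set.mem_insert_of_mem _ (Set.mem_insert_of_mem _ (Set.mem_insert _ _)))
private lemma mem45 (p k l d : ℕ) :
    (FourGen.R₂ * FourGen.R₁ * FourGen.J) ^ l ∈ rels4Four p k l d :=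
  Set.mem_insert_of_mem _ (Set.mem_insert_of_mem _ (Set.mem_insert_of_mem _ (Set.mem_insert_of_mem _ (Set.mem_insert _ _))))
private lemma mem46 (p k l d : ℕ) : FourGen.P ^ (3 * d) ∈ rels4Four p k l d :=
  Set.mem_insert_of_mem _ (Set.mem_insert_of_mem _ (Set.mem_insert_of_mem _ (Set.mem_insert_of_mem _ (Set.mem_insert_of_mem _ (Set.mem_insert _ _)))))
private lemma mem47 (p k l d : ℕ) :
    FourGen.R₂ * (FourGen.P * FourGen.R₁ * FourGen.P⁻¹)⁻¹ ∈ rels4Four p k l d :=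
  Set.mem_insert_of_mem _ (Set.mem_insert_of_mem _ (Set.mem_insert_of_mem _ (Set.mem_insert_of_mem _ (Set.mem_insert_of_mem _ (Set.mem_insert_of_mem _ (Set.mem_insert _ _))))))
private lemma mem48 (p k l d : ℕ) :
    FourGen.R₂ * (FourGen.J * FourGen.R₁ * FourGen.J⁻¹)⁻¹ ∈ rels4Four p k l d :=
  Set.mem_insert_of_mem _ (Set.mem_insert_of_mem _ (Set.mem_insert_of_mem _ (Set.mem_insert_of_mem _ (Set.mem_insert_of_mem _ (Set.mem_insert_of_mem _ (Set.mem_insert_of_mem _ (Set.mem_insert _ _)))))))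
private lemma mem49 (p k l d : ℕ) :
    FourGen.P * (FourGen.R₁ * FourGen.R₂)⁻¹ ∈ rels4Four p k l d :=
  Set.mem_insert_of_mem _ (Set.mem_insert_of_mem _ (Set.mem_insert_of_mem _ (Set.mem_insert_of_mem _ (Set.mem_insert_of_mem _ (Set.mem_insert_of_mem _ (Set.mem_insert_of_mem _ (Set.mem_insert_of_mem _ (Set.mem_singleton _))))))))

private lemma liftFwd (p k l d : ℕ) (hp : 0 < p) :
    ∀ w ∈ rels4Four p k l d, FreeGroup.lift (fwd p k l d) w = 1 := by
  have rel2 : ∀ w ∈ relsFour p k l d, PresentedGroup.mk (relsFour p k l d) w = 1 :=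
    fun w hw => relOne' hw
  set j : PresentedGroup (relsFour p k l d) := PresentedGroup.of Gen2.J with hjdef
  set r : PresentedGroup (relsFour p k l d) := PresentedGroup.of Gen2.R with hrdef
  have h1 : j ^ 3 = 1 := by
    simpa only [map_pow, map_mul, map_inv, mk_of'] using rel2 _ (memF1 p k l d)
  have h2 : r ^ p = 1 := by
    simpa only [map_pow, map_mul, map_inv, mk_of'] using rel2 _ (memF2 p k l d)
  have h3 : (r * j) ^ (2 * k) = 1 := by
    simpa only [map_pow, map_mul, map_inv, mk_of'] using rel2 _ (memF3 p k l d)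
  have h4 : (r * j ^ 2) ^ (2 * l) = 1 := by
    simpa only [map_pow, map_mul, map_inv, mk_of'] using rel2 _ (memF4 p k l d)
  have h5 : (r * j * r * j ^ 2) ^ (3 * d) = 1 := by
    simpa only [map_pow, map_mul, map_inv, mk_of'] using rel2 _ (memF5 p k l d)
  have h6 : r * j * r * j ^ 2 * r * j * r ^ (p - 1) * j ^ 2 * r ^ (p - 1) * j *
      r ^ (p - 1) * j ^ 2 = 1 := by
    simpa only [map_pow, map_mul, map_inv, mk_of'] using rel2 _ (memF6 p k l d)
  rw [pow_pred_eq_inv' hp h2] at h6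
  intro w hw
  simp only [rels4Four, Set.mem_insert_iff, Set.mem_singleton_iff] at hw
  rcases hw with rfl | rfl | rfl | rfl | rfl | rfl | rfl | rfl | rfl <;>
    simp only [FourGen.J, FourGen.P, FourGen.R₁, FourGen.R₂, map_pow, map_mul, map_inv,
      FreeGroup.lift_apply_of, fwd, ← hjdef, ← hrdef]
  · exact h1
  · exact h2
  · rw [conj_pow, h2, mul_one, mul_inv_cancel]
  · rw [iff3 h1 k, ← pow_mul]; exact h3
  · rw [iff4 h1 l, ← pow_mul]; exact h4
  · rw [eqP h1]; exact h5
  · rw [eqW h1, h6, inv_one]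
  · group
  · group

private lemma liftBwd (p k l d : ℕ) (hp : 0 < p) :
    ∀ w ∈ relsFour p k l d, FreeGroup.lift (bwd p k l d) w = 1 := by
  have rel4 : ∀ w ∈ rels4Four p k l d, PresentedGroup.mk (rels4Four p k l d) w = 1 :=
    fun w hw => relOne' hw
  set j : PresentedGroup (rels4Four p k l d) := PresentedGroup.of Gen4.J with hjdef
  set r : PresentedGroup (rels4Four p k l d) := PresentedGroup.of Gen4.R₁ with hrdef
  have c1 : j ^ 3 = 1 := by
    simpa only [FourGen.J, map_pow, mk_of'] using rel4 _ (mem41 p k l d)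
  have c2 : r ^ p = 1 := by
    simpa only [FourGen.R₁, map_pow, mk_of'] using rel4 _ (mem42 p k l d)
  have c8 : (PresentedGroup.of Gen4.R₂ : PresentedGroup (rels4Four p k l d)) =
      j * r * j⁻¹ := by
    have := rel4 _ (mem48 p k l d)
    simp only [FourGen.J, FourGen.P, FourGen.R₁, FourGen.R₂, map_pow, map_mul, map_inv,
      mk_of', ← hjdef, ← hrdef] at this
    exact mul_inv_eq_one.mp this
  have c9 : (PresentedGroup.of Gen4.P : PresentedGroup (rels4Four p k l d)) =
      r * (j * r * j⁻¹) := by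
    have := rel4 _ (mem49 p k l d)
    simp only [FourGen.J, FourGen.P, FourGen.R₁, FourGen.R₂, map_pow, map_mul, map_inv,
      mk_of', ← hjdef, ← hrdef] at this
    rw [mul_inv_eq_one.mp this, c8]
  have c7 : (r * (j * r * j⁻¹)) * r * (r * (j * r * j⁻¹))⁻¹ = j * r * j⁻¹ := by
    have := rel4 _ (mem47 p k l d)
    simp only [FourGen.J, FourGen.P, FourGen.R₁, FourGen.R₂, map_pow, map_mul, map_inv,
      mk_of', ← hjdef, ← hrdef] at this
    rw [c9, c8] at this
    exact (mul_inv_eq_one.mp this).symm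
  have c4 : ((r * (j * r * j⁻¹))⁻¹ * j) ^ k = 1 := by
    have := rel4 _ (mem44 p k l d)
    simp only [FourGen.J, FourGen.P, FourGen.R₁, FourGen.R₂, map_pow, map_mul, map_inv,
      mk_of', ← hjdef, ← hrdef] at this
    rwa [c9] at this
  have c5 : ((j * r * j⁻¹) * r * j) ^ l = 1 := by
    have := rel4 _ (mem45 p k l d)
    simp only [FourGen.J, FourGen.P, FourGen.R₁, FourGen.R₂, map_pow, map_mul, map_inv,
      mk_of', ← hjdef, ← hrdef] at this
    rwa [c8] at this
  have c6 : (r * (j * r * j⁻¹)) ^ (3 * d) = 1 := by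
    have := rel4 _ (mem46 p k l d)
    simp only [FourGen.J, FourGen.P, FourGen.R₁, FourGen.R₂, map_pow, map_mul, map_inv,
      mk_of', ← hjdef, ← hrdef] at this
    rwa [c9] at this
  intro w hw
  simp only [relsFour, Set.mem_insert_iff, Set.mem_singleton_iff] at hw
  rcases hw with rfl | rfl | rfl | rfl | rfl | rfl <;>
    simp only [map_pow, map_mul, map_inv, FreeGroup.lift_apply_of, bwd, ← hjdef, ← hrdef]
  · exact c1
  · exact c2
  · rw [pow_mul]; exact (iff3 c1 k).mp c4
  · rw [pow_mul]; exact (iff4 c1 l).mp c5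
  · rw [← eqP c1]; exact c6
  · rw [pow_pred_eq_inv' hp c2]
    have hT : (j * r * j⁻¹) * ((r * (j * r * j⁻¹)) * r * (r * (j * r * j⁻¹))⁻¹)⁻¹ = 1 := by
      rw [c7, mul_inv_cancel]
    exact inv_eq_one.mp ((eqW c1).symm.trans hT)

/-- The four-generator presentation of a type four 3-fold Deligne-Mostow lattice is isomorphic to
its two-generator presentation, via `J ↦ J`, `R₁ ↦ R₁`, `R₂ ↦ JR₁J⁻¹`, `P ↦ R₁·(JR₁J⁻¹)`. -/
theorem typeFour_presentations_isomorphic (p k l d : ℕ) (hp : 0 < p) (hk : 0 < k)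
    (hl : 0 < l) (hd : 0 < d)
    (hpkl : (1 : ℚ) / l = 1 / 2 - 1 / p - 1 / k) (hpd : (1 : ℚ) / d = 1 / 2 - 3 / p) :
    letI rels4 := rels4Four p k l d
    letI rels2 := relsFour p k l d
    ∃ e : PresentedGroup rels4 ≃* PresentedGroup rels2,
      e (PresentedGroup.of Gen4.J) = PresentedGroup.of Gen2.J ∧
      e (PresentedGroup.of Gen4.R₁) = PresentedGroup.of Gen2.R ∧
      e (PresentedGroup.of Gen4.R₂) =
        PresentedGroup.of Gen2.J * PresentedGroup.of Gen2.R * (PresentedGroup.of Gen2.J)⁻¹ ∧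
      e (PresentedGroup.of Gen4.P) =
        PresentedGroup.of Gen2.R * (PresentedGroup.of Gen2.J * PresentedGroup.of Gen2.R * (PresentedGroup.of Gen2.J)⁻¹) := by
  have hfwd := liftFwd p k l d hp
  have hbwd := liftBwd p k l d hp
  set phi : PresentedGroup (rels4Four p k l d) →* PresentedGroup (relsFour p k l d) :=
    PresentedGroup.toGroup hfwd with hphi
  set psi : PresentedGroup (relsFour p k l d) →* PresentedGroup (rels4Four p k l d) :=
    PresentedGroup.toGroup hbwd with hpsi
  have rel4 : ∀ w ∈ rels4Four p k l d, PresentedGroup.mk (rels4Four p k l d) w = 1 :=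
    fun w hw => relOne' hw
  have c8 : (PresentedGroup.of Gen4.R₂ : PresentedGroup (rels4Four p k l d)) =
      PresentedGroup.of Gen4.J * PresentedGroup.of Gen4.R₁ * (PresentedGroup.of Gen4.J)⁻¹ := by
    have := rel4 _ (mem48 p k l d)
    simp only [FourGen.J, FourGen.P, FourGen.R₁, FourGen.R₂, map_mul, map_inv, mk_of'] at this
    exact mul_inv_eq_one.mp this
  have c9 : (PresentedGroup.of Gen4.P : PresentedGroup (rels4Four p k l d)) =
      PresentedGroup.of Gen4.R₁ * (PresentedGroup.of Gen4.J * PresentedGroup.of Gen4.R₁ *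
        (PresentedGroup.of Gen4.J)⁻¹) := by
    have := rel4 _ (mem49 p k l d)
    simp only [FourGen.J, FourGen.P, FourGen.R₁, FourGen.R₂, map_mul, map_inv, mk_of'] at this
    rw [mul_inv_eq_one.mp this, c8, mul_assoc]
  have h1 : psi.comp phi = MonoidHom.id _ := by
    ext x
    cases x <;>
      simp only [MonoidHom.comp_apply, MonoidHom.id_apply, hphi, hpsi,
        PresentedGroup.toGroup.of, fwd, bwd, map_mul, map_inv]
    · exact c9.symm
    · exact c8.symm
  have h2 : phi.comp psi = MonoidHom.id _ := by
    ext x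
    cases x <;>
      simp only [MonoidHom.comp_apply, MonoidHom.id_apply, hphi, hpsi,
        PresentedGroup.toGroup.of, fwd, bwd, map_mul, map_inv]
  refine ⟨MonoidHom.toMulEquiv phi psi h1 h2, ?_, ?_, ?_, ?_⟩ <;>
    simp only [MonoidHom.toMulEquiv_apply, hphi, PresentedGroup.toGroup.of, fwd]
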